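/- Suppose v ∈ C²([0,T]) with v(0)=v(T)=v'(0)=v'(T)=0, |v''| ≤ j_max on [0,T], and ∫₀ᵀ v = s₀ > 0. Then T³ ≥ 8 s₀ / j_max. -/

import Mathlib

theorem stmt_4 (T s₀ jmax : ℝ) (v : ℝ → ℝ)
    (hT : 0 ≤ T)
    (hv : ContDiffOn ℝ 2 v (Set.Icc 0 T))
    (hv0 : v 0 = 0) (hvT : v T = 0)
    (hdv0 : deriv v 0 = 0) (hdvT : deriv v T = 0)
    (hjmax : 0 < jmax)
    (hbj : ∀ t ∈ Set.Icc 0 T, |deriv (deriv v) t| ≤ jmax)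
    (hs : ∫ t in (0:ℝ)..T, v t = s₀) (hs0 : 0 < s₀) :
    T ^ 3 ≥ 8 * s₀ / jmax := by
  -- T must be positive
  rcases eq_or_lt_of_le hT with hT0 | hTpos
  · exfalso
    rw [← hT0, intervalIntegral.integral_same] at hs
    linarith
  -- setup
  have hIoo : IsOpen (Set.Ioo (0:ℝ) T) := isOpen_Ioo
  have hvIoo : ContDiffOn ℝ 2 v (Set.Ioo 0 T) := hv.mono Set.Ioo_subset_Icc_self
  have hsplit := (contDiffOn_succ_iff_deriv_of_isOpen (n := 1) (f := v) hIoo).1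
    (hvIoo.of_le (by norm_num))
  have hd1 : ∀ t ∈ Set.Ioo (0:ℝ) T, DifferentiableAt ℝ v t := by
    intro t ht
    exact hsplit.1.differentiableAt (hIoo.mem_nhds ht)
  have hd2 : ∀ t ∈ Set.Ioo (0:ℝ) T, DifferentiableAt ℝ (deriv v) t := by
    intro t ht
    exact (hsplit.2.2.differentiableOn (by norm_num)).differentiableAt (hIoo.mem_nhds ht)
  -- the comparison function
  set w : ℝ → ℝ := fun t => jmax * (t * (T - t)) / 2 - v t with hw
  have hwd : ∀ t ∈ Set.Ioo (0:ℝ) T, HasDerivAt w (jmax * (T - 2 * t) / 2 - deriv v t) t := by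
    intro t ht
    have hp : HasDerivAt (fun t : ℝ => jmax * (t * (T - t)) / 2) (jmax * (T - 2 * t) / 2) t := by
      have := (((hasDerivAt_id t).mul ((hasDerivAt_const t T).sub (hasDerivAt_id t))).const_mul
        jmax).div_const 2
      refine this.congr_deriv ?_
      simp only [Pi.sub_apply, id_eq]
      ring
    exact hp.sub ((hd1 t ht).hasDerivAt)
  have hw' : ∀ t ∈ Set.Ioo (0:ℝ) T, deriv w t = jmax * (T - 2 * t) / 2 - deriv v t :=
    fun t ht => (hwd t ht).deriv
  have hweq : ∀ t ∈ Set.Ioo (0:ℝ) T,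
      deriv w =ᶠ[nhds t] fun s => jmax * (T - 2 * s) / 2 - deriv v s := by
    intro t ht
    filter_upwards [hIoo.mem_nhds ht] with s hs using hw' s hs
  have hgd : ∀ t ∈ Set.Ioo (0:ℝ) T,
      HasDerivAt (fun s => jmax * (T - 2 * s) / 2 - deriv v s)
        (-jmax - deriv (deriv v) t) t := by
    intro t ht
    have hp : HasDerivAt (fun s : ℝ => jmax * (T - 2 * s) / 2) (-jmax) t := by
      have := (((hasDerivAt_const t T).sub ((hasDerivAt_id t).const_mul 2)).const_mul
        jmax).div_const 2
      refine this.congr_deriv ?_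
      ring
    exact hp.sub ((hd2 t ht).hasDerivAt)
  -- w is concave on [0, T]
  have hconc : ConcaveOn ℝ (Set.Icc 0 T) w := by
    apply concaveOn_of_deriv2_nonpos (convex_Icc 0 T)
    · exact (((continuous_const.mul (continuous_id.mul
        (continuous_const.sub continuous_id))).div_const 2).continuousOn).sub hv.continuousOn
    · rw [interior_Icc]
      intro t ht
      exact ((hwd t ht).differentiableAt).differentiableWithinAt
    · rw [interior_Icc]
      intro t ht
      have : DifferentiableAt ℝ (deriv w) t :=
        ((hgd t ht).differentiableAt).congr_of_eventuallyEq (hweq t ht)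
      exact this.differentiableWithinAt
    · rw [interior_Icc]
      intro t ht
      have hderiv2 : deriv (deriv w) t = -jmax - deriv (deriv v) t := by
        rw [Filter.EventuallyEq.deriv_eq (hweq t ht)]
        exact (hgd t ht).deriv
      have hb := hbj t (Set.Ioo_subset_Icc_self ht)
      have := abs_le.1 hb
      simp only [Function.iterate_succ, Function.iterate_zero, Function.comp_apply, id]
      rw [show deriv (deriv w) t = -jmax - deriv (deriv v) t from hderiv2] at *
      linarith [this.1]
  -- w is nonneg on [0, T]
  have hw0 : w 0 = 0 := by simp [hw, hv0]
  have hwT : w T = 0 := by simp [hw, hvT]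
  have hwnonneg : ∀ t ∈ Set.Icc (0:ℝ) T, 0 ≤ w t := by
    intro t ht
    have h0m : (0:ℝ) ∈ Set.Icc (0:ℝ) T := Set.left_mem_Icc.2 hT
    have hTm : T ∈ Set.Icc (0:ℝ) T := Set.right_mem_Icc.2 hT
    have ha : 0 ≤ 1 - t / T := by
      have : t / T ≤ 1 := (div_le_one hTpos).2 ht.2
      linarith
    have hb : 0 ≤ t / T := div_nonneg ht.1 hT
    have hab : (1 - t / T) + t / T = 1 := by ring
    have := hconc.2 h0m hTm ha hb hab
    have heq : (1 - t / T) • (0:ℝ) + (t / T) • T = t := by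
      field_simp
      simp [hTpos.ne']
    rw [heq, hw0, hwT] at this
    simpa using this
  -- integral bound
  have hvint : IntervalIntegrable v MeasureTheory.volume 0 T := by
    apply ContinuousOn.intervalIntegrable
    rw [Set.uIcc_of_le hT]
    exact hv.continuousOn
  have hpint : IntervalIntegrable (fun t => jmax * (t * (T - t)) / 2)
      MeasureTheory.volume 0 T :=
    (((continuous_const.mul (continuous_id.mul
        (continuous_const.sub continuous_id))).div_const 2).intervalIntegrable 0 T)
  have hmono : ∫ t in (0:ℝ)..T, v t ≤ ∫ t in (0:ℝ)..T, jmax * (t * (T - t)) / 2 := by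
    apply intervalIntegral.integral_mono_on hT hvint hpint
    intro t ht
    have := hwnonneg t ht
    simp only [hw] at this
    linarith
  have hval : ∫ t in (0:ℝ)..T, jmax * (t * (T - t)) / 2 = jmax * T ^ 3 / 12 := by
    have hF : ∀ t ∈ Set.uIcc (0:ℝ) T,
        HasDerivAt (fun s => jmax * (T * s ^ 2 / 2 - s ^ 3 / 3) / 2)
          (jmax * (t * (T - t)) / 2) t := by
      intro t _
      have := ((((hasDerivAt_pow 2 t).const_mul T).div_const 2).sub
        ((hasDerivAt_pow 3 t).div_const 3)).const_mul jmax |>.div_const 2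
      refine this.congr_deriv ?_
      ring
    rw [intervalIntegral.integral_eq_sub_of_hasDerivAt hF hpint]
    ring
  have hkey : s₀ ≤ jmax * T ^ 3 / 12 := by rw [← hs, ← hval]; exact hmono
  rw [ge_iff_le, div_le_iff₀ hjmax]
  nlinarith
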